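/- Let H be a symmetric positive definite n×n real matrix, X an n×p real matrix of rank p, and L₁ (n×p) and L₂ (n×(n−p)) real matrices such that L = [L₁ L₂] is nonsingular, L₁ᵀX = I_p, and L₂ᵀX = 0. Then det(LᵀHL) = det((XᵀH⁻¹X)⁻¹) · det(L₂ᵀHL₂); equivalently, det(H) · det(LᵀL) · det(XᵀH⁻¹X) = det(L₂ᵀHL₂). -/

import Mathlib

open Matrix

private lemma posDef_conj {k m : Type*} [Fintype k] [Fintype m]
    {H : Matrix k k ℝ} (hH : H.PosDef) (A : Matrix k m ℝ)
    (hA : ∀ x : m → ℝ, x ≠ 0 → A *ᵥ x ≠ 0) : (Aᵀ * H * A).PosDef := by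
  rw [posDef_iff_dotProduct_mulVec]
  constructor
  · have := isHermitian_conjTranspose_mul_mul A hH.isHermitian
    simpa [conjTranspose_eq_transpose_of_trivial] using this
  · intro x hx
    have h1 : (Aᵀ * H * A) *ᵥ x = Aᵀ *ᵥ (H *ᵥ (A *ᵥ x)) := by
      simp [← mulVec_mulVec]
    rw [h1]
    have h2 : star x ⬝ᵥ (Aᵀ *ᵥ (H *ᵥ (A *ᵥ x))) = star (A *ᵥ x) ⬝ᵥ (H *ᵥ (A *ᵥ x)) := by
      simp only [star_trivial]
      rw [dotProduct_mulVec, vecMul_transpose]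
    rw [h2]
    exact hH.dotProduct_mulVec_pos (hA x hx)

private lemma conj_E {α β : Type*} [Fintype α] [Fintype β] [DecidableEq α]
    (W : Matrix (α ⊕ β) (α ⊕ β) ℝ) :
    (fromRows (1 : Matrix α α ℝ) (0 : Matrix β α ℝ))ᵀ * W *
      fromRows (1 : Matrix α α ℝ) (0 : Matrix β α ℝ) = W.toBlocks₁₁ := by
  rw [transpose_fromRows, transpose_one, transpose_zero, ← fromBlocks_toBlocks W,
    fromCols_mul_fromBlocks, fromCols_mul_fromRows]
  simp

theorem stmt_17 {n p : ℕ} (H : Matrix (Fin n) (Fin n) ℝ)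
    (X : Matrix (Fin n) (Fin p) ℝ)
    (L₁ : Matrix (Fin n) (Fin p) ℝ) (L₂ : Matrix (Fin n) (Fin (n - p)) ℝ)
    (L : Matrix (Fin n) (Fin p ⊕ Fin (n - p)) ℝ) (hLdef : L = Matrix.fromCols L₁ L₂)
    (hH : H.PosDef) (hX : X.rank = p)
    (hL : ∃ M : Matrix (Fin p ⊕ Fin (n - p)) (Fin n) ℝ, L * M = 1 ∧ M * L = 1)
    (hL₁X : L₁ᵀ * X = 1) (hL₂X : L₂ᵀ * X = 0) :
    (Lᵀ * H * L).det = ((Xᵀ * H⁻¹ * X)⁻¹).det * (L₂ᵀ * H * L₂).det ∧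
      H.det * (Lᵀ * L).det * (Xᵀ * H⁻¹ * X).det = (L₂ᵀ * H * L₂).det := by
  obtain ⟨M, hLM, hML⟩ := hL
  -- H invertible facts
  have hHdet : IsUnit H.det := isUnit_iff_ne_zero.mpr (ne_of_gt hH.det_pos)
  have hHH : H * H⁻¹ = 1 := mul_nonsing_inv H hHdet
  have hHH' : H⁻¹ * H = 1 := nonsing_inv_mul H hHdet
  -- transposed inverses
  have hMtLt : Mᵀ * Lᵀ = 1 := by rw [← transpose_mul, hLM, transpose_one]
  have hLtMt : Lᵀ * Mᵀ = 1 := by rw [← transpose_mul, hML, transpose_one]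
  -- mulVec injectivity of L and L₂
  have hLinj : ∀ x : (Fin p ⊕ Fin (n - p)) → ℝ, x ≠ 0 → L *ᵥ x ≠ 0 := by
    intro x hx h0
    apply hx
    have : M *ᵥ (L *ᵥ x) = x := by rw [mulVec_mulVec, hML, one_mulVec]
    rw [h0, mulVec_zero] at this
    exact this.symm
  have hL₂inj : ∀ x : Fin (n - p) → ℝ, x ≠ 0 → L₂ *ᵥ x ≠ 0 := by
    intro x hx h0
    have hv : L *ᵥ (Sum.elim 0 x) = L₂ *ᵥ x := by
      rw [hLdef, fromCols_mulVec_sumElim, mulVec_zero, zero_add]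
    have hvne : (Sum.elim (0 : Fin p → ℝ) x) ≠ 0 := by
      obtain ⟨i, hi⟩ := Function.ne_iff.mp hx
      exact Function.ne_iff.mpr ⟨Sum.inr i, by simpa using hi⟩
    exact hLinj _ hvne (hv.trans h0)
  -- positive definiteness
  have hK : (Lᵀ * H * L).PosDef := posDef_conj hH L hLinj
  have hD : (L₂ᵀ * H * L₂).PosDef := posDef_conj hH L₂ hL₂inj
  -- block structure
  set A := L₁ᵀ * H * L₁ with hA
  set B := L₁ᵀ * H * L₂ with hB
  set C := L₂ᵀ * H * L₁ with hC
  set D := L₂ᵀ * H * L₂ with hDdef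
  have hKb : Lᵀ * H * L = fromBlocks A B C D := by
    rw [hLdef, transpose_fromCols]
    simp only [fromRows_mul, mul_fromCols]
    rw [fromCols_fromRows_eq_fromBlocks]
  -- W is a two-sided inverse of K
  set W := M * H⁻¹ * Mᵀ with hW
  have hKW : (Lᵀ * H * L) * W = 1 := by
    calc (Lᵀ * H * L) * (M * H⁻¹ * Mᵀ)
        = Lᵀ * (H * ((L * M) * (H⁻¹ * Mᵀ))) := by simp only [Matrix.mul_assoc]
      _ = Lᵀ * ((H * H⁻¹) * Mᵀ) := by rw [hLM, Matrix.one_mul, Matrix.mul_assoc]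
      _ = Lᵀ * Mᵀ := by rw [hHH, Matrix.one_mul]
      _ = 1 := hLtMt
  have hWK : W * (Lᵀ * H * L) = 1 := by
    calc (M * H⁻¹ * Mᵀ) * (Lᵀ * H * L)
        = M * (H⁻¹ * ((Mᵀ * Lᵀ) * (H * L))) := by simp only [Matrix.mul_assoc]
      _ = M * ((H⁻¹ * H) * L) := by rw [hMtLt, Matrix.one_mul, Matrix.mul_assoc]
      _ = M * L := by rw [hHH', Matrix.one_mul]
      _ = 1 := hML
  letI iK : Invertible (Lᵀ * H * L) := ⟨W, hWK, hKW⟩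
  letI iFB : Invertible (fromBlocks A B C D) := hKb ▸ iK
  letI iD : Invertible D := hD.isUnit.invertible
  letI iS : Invertible (A - B * ⅟D * C) := invertibleOfFromBlocks₂₂Invertible A B C D
  set S := A - B * ⅟D * C with hS
  -- identify the inverse of the block matrix
  have hFBW : ⅟(fromBlocks A B C D) = W :=
    invOf_eq_right_inv (by rw [← hKb]; exact hKW)
  have hFBinv := invOf_fromBlocks₂₂_eq A B C D
  have h11 : W.toBlocks₁₁ = ⅟S := by
    rw [← hFBW, hFBinv]
    exact toBlocks_fromBlocks₁₁ _ _ _ _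
  -- express X via M
  have hLtX : Lᵀ * X = fromRows (1 : Matrix (Fin p) (Fin p) ℝ) 0 := by
    rw [hLdef, transpose_fromCols, fromRows_mul, hL₁X, hL₂X]
  have hXeq : X = Mᵀ * fromRows (1 : Matrix (Fin p) (Fin p) ℝ) (0 : Matrix (Fin (n - p)) (Fin p) ℝ) := by
    calc X = (Mᵀ * Lᵀ) * X := by rw [hMtLt, Matrix.one_mul]
      _ = Mᵀ * (Lᵀ * X) := by rw [Matrix.mul_assoc]
      _ = Mᵀ * fromRows (1 : Matrix (Fin p) (Fin p) ℝ) (0 : Matrix (Fin (n - p)) (Fin p) ℝ) := by rw [hLtX]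
  -- X^T H⁻¹ X equals the top-left block of W
  have hXHX : Xᵀ * H⁻¹ * X = ⅟S := by
    have hEW : Xᵀ * H⁻¹ * X = W.toBlocks₁₁ := by
      rw [← conj_E W, hW, hXeq]
      simp only [transpose_mul, transpose_transpose, Matrix.mul_assoc]
    rw [hEW, h11]
  have hSdet : S.det ≠ 0 := (isUnit_det_of_invertible S).ne_zero
  have hXHXdet : (Xᵀ * H⁻¹ * X).det = S.det⁻¹ := by
    rw [hXHX, invOf_eq_nonsing_inv, det_nonsing_inv, Ring.inverse_eq_inv']
  have hXHXinv : (Xᵀ * H⁻¹ * X)⁻¹ = S := by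
    rw [hXHX, invOf_eq_nonsing_inv, nonsing_inv_nonsing_inv S (isUnit_det_of_invertible S)]
  have hdetK : (Lᵀ * H * L).det = D.det * S.det := by
    rw [hKb, det_fromBlocks₂₂]
  -- p ≤ n and the reindexing equivalence
  have hpn : p ≤ n := by
    have := X.rank_le_card_height
    simpa [hX] using this
  have e : Fin n ≃ (Fin p ⊕ Fin (n - p)) :=
    (finSumFinEquiv.trans (finCongr (Nat.add_sub_cancel' hpn))).symm
  set L' : Matrix (Fin n) (Fin n) ℝ := L.submatrix id e with hL'
  have hLsub : L = L'.submatrix id e.symm := by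
    ext i j; simp [hL']
  have hconj : ∀ G : Matrix (Fin n) (Fin n) ℝ,
      Lᵀ * G * L = ((L'ᵀ * G) * L').submatrix e.symm e.symm := by
    intro G
    ext a b
    simp [Matrix.mul_apply, hL', Finset.sum_mul, Finset.mul_sum]
  have hdetKL : (Lᵀ * H * L).det = H.det * (Lᵀ * L).det := by
    have hG := hconj H
    have hI : Lᵀ * L = (L'ᵀ * L').submatrix e.symm e.symm := by
      have := hconj 1
      simpa [Matrix.mul_one] using this
    rw [hG, hI, det_submatrix_equiv_self, det_submatrix_equiv_self, det_mul, det_mul, det_mul,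
      det_transpose]
    ring
  constructor
  · rw [hdetK, hXHXinv, mul_comm]
  · rw [← hdetKL, hdetK, hXHXdet, mul_assoc, mul_inv_cancel₀ hSdet, mul_one]
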